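/- arXiv:2603.15384 — 2 statements merged into one kernel-verified Lean document; each statement's English description precedes it below -/
import Mathlib

section
/- For all integrable measures μ, ν on X, POT₁(μ, ν) ≤ OT₁(μ ⊕_Δ ν, ν ⊕_Δ μ) ≤ 2·POT₁(μ, ν), where POT₁ is the partial optimal transport distance with deletion-to-diagonal cost, and OT₁ is the 1-Wasserstein distance on X̄ with ground cost ‖·‖_∞. -/
open MeasureTheory ENNReal

/-- The `ℓ∞` distance on `ℝ²`. -/
noncomputable def dinf (p q : ℝ × ℝ) : ℝ := max |p.1 - q.1| |p.2 - q.2|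

/-- The diagonal projection (in the `ℓ∞` norm) `π_Δ(x,y) = ((x+y)/2,(x+y)/2)`. -/
noncomputable def piD (p : ℝ × ℝ) : ℝ × ℝ := ((p.1 + p.2) / 2, (p.1 + p.2) / 2)

/-- The Euclidean norm of a point of `ℝ²`. -/
noncomputable def enorm2 (p : ℝ × ℝ) : ℝ := Real.sqrt (p.1 ^ 2 + p.2 ^ 2)

/-- The cost of a partial transport plan `γ` between `μ` and `ν`: transported mass pays
the `ℓ∞` distance, unmatched mass is sent to the diagonal at persistence cost. -/
noncomputable def planCost (γ : Measure ((ℝ × ℝ) × (ℝ × ℝ))) (μ ν : Measure (ℝ × ℝ)) :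
    ℝ≥0∞ :=
  (∫⁻ z, ENNReal.ofReal (dinf z.1 z.2) ∂γ) +
  (∫⁻ p, ENNReal.ofReal (dinf p (piD p)) ∂(μ - γ.map Prod.fst)) +
  (∫⁻ q, ENNReal.ofReal (dinf q (piD q)) ∂(ν - γ.map Prod.snd))

/-- The partial optimal transport distance `POT₁(μ,ν)`. -/
noncomputable def POT (μ ν : Measure (ℝ × ℝ)) : ℝ≥0∞ :=
  ⨅ γ : {γ : Measure ((ℝ × ℝ) × (ℝ × ℝ)) //
      γ.map Prod.fst ≤ μ ∧ γ.map Prod.snd ≤ ν}, planCost γ.1 μ ν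

/-- The 1-Wasserstein distance (with `ℓ∞` ground cost) between two positive measures. -/
noncomputable def OT (η₁ η₂ : Measure (ℝ × ℝ)) : ℝ≥0∞ :=
  ⨅ Γ : {Γ : Measure ((ℝ × ℝ) × (ℝ × ℝ)) //
      Γ.map Prod.fst = η₁ ∧ Γ.map Prod.snd = η₂},
    ∫⁻ z, ENNReal.ofReal (dinf z.1 z.2) ∂Γ.1

lemma dinf_meas : Measurable fun z : (ℝ × ℝ) × (ℝ × ℝ) => ENNReal.ofReal (dinf z.1 z.2) := by
  apply ENNReal.measurable_ofReal.comp
  unfold dinf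
  fun_prop

lemma del_meas : Measurable fun p : ℝ × ℝ => ENNReal.ofReal (dinf p (piD p)) := by
  apply ENNReal.measurable_ofReal.comp
  unfold dinf piD
  fun_prop

lemma piD_meas : Measurable piD := by unfold piD; fun_prop

lemma dinf_symm (p q : ℝ × ℝ) : dinf p q = dinf q p := by
  unfold dinf; rw [abs_sub_comm, abs_sub_comm p.2]

lemma del_le_diag (p : ℝ × ℝ) (t : ℝ) : dinf p (piD p) ≤ dinf p (t, t) := by
  unfold dinf piD
  simp only
  have h1 : |p.1 - (p.1 + p.2) / 2| = |p.1 - p.2| / 2 := by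
    rw [show p.1 - (p.1 + p.2) / 2 = (p.1 - p.2) / 2 by ring, abs_div]
    norm_num
  have h2 : |p.2 - (p.1 + p.2) / 2| = |p.1 - p.2| / 2 := by
    rw [show p.2 - (p.1 + p.2) / 2 = -((p.1 - p.2) / 2) by ring, abs_neg, abs_div]
    norm_num
  rw [h1, h2, max_self]
  have key : |p.1 - p.2| ≤ |p.1 - t| + |p.2 - t| := by
    calc |p.1 - p.2| ≤ |p.1 - t| + |t - p.2| := abs_sub_le _ _ _
      _ = |p.1 - t| + |p.2 - t| := by rw [abs_sub_comm t]
  have hA := le_max_left |p.1 - t| |p.2 - t|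
  have hB := le_max_right |p.1 - t| |p.2 - t|
  linarith

lemma dinf_piD_le (p q : ℝ × ℝ) : dinf (piD p) (piD q) ≤ dinf p q := by
  unfold dinf piD
  simp only [max_self]
  have key : |(p.1 + p.2) / 2 - (q.1 + q.2) / 2| ≤ (|p.1 - q.1| + |p.2 - q.2|) / 2 := by
    rw [show (p.1 + p.2) / 2 - (q.1 + q.2) / 2 = ((p.1 - q.1) + (p.2 - q.2)) / 2 by ring,
      abs_div]
    have := abs_add_le (p.1 - q.1) (p.2 - q.2)
    rw [show |(2:ℝ)| = 2 by norm_num]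
    linarith
  have hA := le_max_left |p.1 - q.1| |p.2 - q.2|
  have hB := le_max_right |p.1 - q.1| |p.2 - q.2|
  linarith

/-- For integrable measures `μ, ν` on `X = {x < y}`:
`POT₁(μ,ν) ≤ OT₁(μ ⊕_Δ ν, ν ⊕_Δ μ) ≤ 2 POT₁(μ,ν)`. -/
theorem pot_le_ot_crossAug_le_two_pot
    (μ ν : Measure (ℝ × ℝ)) (hμfin : IsFiniteMeasure μ) (hνfin : IsFiniteMeasure ν)
    (hμX : μ {p : ℝ × ℝ | ¬ p.1 < p.2} = 0) (hνX : ν {p : ℝ × ℝ | ¬ p.1 < p.2} = 0)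
    (hμint : ∫⁻ p, ENNReal.ofReal (enorm2 p) ∂μ < ⊤)
    (hνint : ∫⁻ p, ENNReal.ofReal (enorm2 p) ∂ν < ⊤) :
    POT μ ν ≤ OT (μ + ν.map piD) (ν + μ.map piD) ∧
    OT (μ + ν.map piD) (ν + μ.map piD) ≤ 2 * POT μ ν := by

  set X : Set (ℝ × ℝ) := {p | p.1 < p.2} with hXdef
  have hX : MeasurableSet X := measurableSet_lt measurable_fst measurable_snd
  have hpiD_null : ∀ (κ : Measure (ℝ × ℝ)) (B : Set (ℝ × ℝ)), MeasurableSet B →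
      (∀ t : ℝ, ((t, t) : ℝ × ℝ) ∉ B) → κ.map piD B = 0 := by
    intro κ B hB hdiag
    rw [Measure.map_apply piD_meas hB]
    have hempty : piD ⁻¹' B = ∅ := by
      ext p
      simp only [Set.mem_preimage, Set.mem_empty_iff_false, iff_false]
      exact hdiag _
    rw [hempty, measure_empty]
  have hXnull : ∀ κ : Measure (ℝ × ℝ), κ.map piD X = 0 := fun κ =>
    hpiD_null κ X hX (fun t ht => lt_irrefl t ht)
  have hμae : ∀ᵐ p ∂μ, p ∈ X := by rw [ae_iff]; exact hμX
  have hνae : ∀ᵐ p ∂ν, p ∈ X := by rw [ae_iff]; exact hνX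
  constructor
  · -- POT ≤ OT
    refine le_iInf ?_
    rintro ⟨Γ, hΓ1, hΓ2⟩
    set S₁ : Set ((ℝ × ℝ) × (ℝ × ℝ)) := X ×ˢ X with hS₁def
    set S₂ : Set ((ℝ × ℝ) × (ℝ × ℝ)) := X ×ˢ Xᶜ with hS₂def
    set S₃ : Set ((ℝ × ℝ) × (ℝ × ℝ)) := Xᶜ ×ˢ X with hS₃def
    set γ := Γ.restrict S₁ with hγdef
    have hγ1 : γ.map Prod.fst ≤ μ := by
      rw [Measure.le_iff]
      intro A hA
      rw [Measure.map_apply measurable_fst hA, hγdef,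
        Measure.restrict_apply (measurable_fst hA)]
      have hsub : Prod.fst ⁻¹' A ∩ S₁ ⊆ Prod.fst ⁻¹' (A ∩ X) := by
        rintro z ⟨hzA, hz1, hz2⟩; exact ⟨hzA, hz1⟩
      calc Γ (Prod.fst ⁻¹' A ∩ S₁) ≤ Γ (Prod.fst ⁻¹' (A ∩ X)) := measure_mono hsub
        _ = (μ + ν.map piD) (A ∩ X) := by
            rw [← Measure.map_apply measurable_fst (hA.inter hX), hΓ1]
        _ = μ (A ∩ X) := by
            rw [Measure.add_apply,
              measure_mono_null Set.inter_subset_right (hXnull ν), add_zero]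
        _ ≤ μ A := measure_mono Set.inter_subset_left
    have hγ2 : γ.map Prod.snd ≤ ν := by
      rw [Measure.le_iff]
      intro A hA
      rw [Measure.map_apply measurable_snd hA, hγdef,
        Measure.restrict_apply (measurable_snd hA)]
      have hsub : Prod.snd ⁻¹' A ∩ S₁ ⊆ Prod.snd ⁻¹' (A ∩ X) := by
        rintro z ⟨hzA, hz1, hz2⟩; exact ⟨hzA, hz2⟩
      calc Γ (Prod.snd ⁻¹' A ∩ S₁) ≤ Γ (Prod.snd ⁻¹' (A ∩ X)) := measure_mono hsub
        _ = (ν + μ.map piD) (A ∩ X) := by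
            rw [← Measure.map_apply measurable_snd (hA.inter hX), hΓ2]
        _ = ν (A ∩ X) := by
            rw [Measure.add_apply,
              measure_mono_null Set.inter_subset_right (hXnull μ), add_zero]
        _ ≤ ν A := measure_mono Set.inter_subset_left
    refine iInf_le_of_le ⟨γ, hγ1, hγ2⟩ ?_
    -- decompositions
    have hdisj12 : Disjoint S₁ S₂ := by
      rw [Set.disjoint_left]; rintro z ⟨_, hz2⟩ ⟨_, hz2'⟩; exact hz2' hz2
    have hdisj13 : Disjoint S₁ S₃ := by
      rw [Set.disjoint_left]; rintro z ⟨hz1, _⟩ ⟨hz1', _⟩; exact hz1' hz1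
    have hunion12 : S₁ ∪ S₂ = Prod.fst ⁻¹' X := by
      ext z
      simp only [hS₁def, hS₂def, Set.mem_union, Set.mem_prod, Set.mem_preimage,
        Set.mem_compl_iff]
      tauto
    have hunion13 : S₁ ∪ S₃ = Prod.snd ⁻¹' X := by
      ext z
      simp only [hS₁def, hS₃def, Set.mem_union, Set.mem_prod, Set.mem_preimage,
        Set.mem_compl_iff]
      tauto
    have hfsteq : γ.map Prod.fst + (Γ.restrict S₂).map Prod.fst = μ := by
      rw [hγdef, ← Measure.map_add _ _ measurable_fst,
        ← Measure.restrict_union hdisj12 (hX.prod hX.compl), hunion12,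
        ← Measure.restrict_map measurable_fst hX, hΓ1, Measure.restrict_add,
        Measure.restrict_eq_self_of_ae_mem hμae,
        Measure.restrict_eq_zero.mpr (hXnull ν), add_zero]
    have hsndeq : γ.map Prod.snd + (Γ.restrict S₃).map Prod.snd = ν := by
      rw [hγdef, ← Measure.map_add _ _ measurable_snd,
        ← Measure.restrict_union hdisj13 (hX.compl.prod hX), hunion13,
        ← Measure.restrict_map measurable_snd hX, hΓ2, Measure.restrict_add,
        Measure.restrict_eq_self_of_ae_mem hνae,
        Measure.restrict_eq_zero.mpr (hXnull μ), add_zero]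
    have hsub1 : μ - γ.map Prod.fst ≤ (Γ.restrict S₂).map Prod.fst := by
      rw [Measure.sub_def]
      refine sInf_le ?_
      show μ ≤ (Γ.restrict S₂).map Prod.fst + γ.map Prod.fst
      rw [add_comm]; exact le_of_eq hfsteq.symm
    have hsub2 : ν - γ.map Prod.snd ≤ (Γ.restrict S₃).map Prod.snd := by
      rw [Measure.sub_def]
      refine sInf_le ?_
      show ν ≤ (Γ.restrict S₃).map Prod.snd + γ.map Prod.snd
      rw [add_comm]; exact le_of_eq hsndeq.symm
    -- a.e. statements
    have hBmeas : MeasurableSet {q : ℝ × ℝ | q.2 < q.1} :=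
      measurableSet_lt measurable_snd measurable_fst
    have hBsub : {q : ℝ × ℝ | q.2 < q.1} ⊆ {p : ℝ × ℝ | ¬ p.1 < p.2} :=
      fun q hq => lt_asymm hq
    have hBdiag : ∀ t : ℝ, ((t, t) : ℝ × ℝ) ∉ {q : ℝ × ℝ | q.2 < q.1} :=
      fun t ht => lt_irrefl t ht
    have hae2 : ∀ᵐ z ∂Γ, ¬ z.2.2 < z.2.1 := by
      rw [ae_iff]
      have hset : {z : (ℝ × ℝ) × (ℝ × ℝ) | ¬ ¬ z.2.2 < z.2.1}
          = Prod.snd ⁻¹' {q : ℝ × ℝ | q.2 < q.1} := by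
        ext z; simp [not_not]
      rw [hset, ← Measure.map_apply measurable_snd hBmeas, hΓ2, Measure.add_apply,
        measure_mono_null hBsub hνX, hpiD_null μ _ hBmeas hBdiag, add_zero]
    have hae1 : ∀ᵐ z ∂Γ, ¬ z.1.2 < z.1.1 := by
      rw [ae_iff]
      have hset : {z : (ℝ × ℝ) × (ℝ × ℝ) | ¬ ¬ z.1.2 < z.1.1}
          = Prod.fst ⁻¹' {q : ℝ × ℝ | q.2 < q.1} := by
        ext z; simp [not_not]
      rw [hset, ← Measure.map_apply measurable_fst hBmeas, hΓ1, Measure.add_apply,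
        measure_mono_null hBsub hμX, hpiD_null ν _ hBmeas hBdiag, add_zero]
    -- bound the deletion terms
    have hB2 : (∫⁻ p, ENNReal.ofReal (dinf p (piD p)) ∂(μ - γ.map Prod.fst))
        ≤ ∫⁻ z in S₂, ENNReal.ofReal (dinf z.1 z.2) ∂Γ := by
      calc (∫⁻ p, ENNReal.ofReal (dinf p (piD p)) ∂(μ - γ.map Prod.fst))
          ≤ ∫⁻ p, ENNReal.ofReal (dinf p (piD p)) ∂((Γ.restrict S₂).map Prod.fst) :=
            lintegral_mono' hsub1 le_rfl
        _ = ∫⁻ z, ENNReal.ofReal (dinf z.1 (piD z.1)) ∂(Γ.restrict S₂) :=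
            lintegral_map del_meas measurable_fst
        _ ≤ ∫⁻ z in S₂, ENNReal.ofReal (dinf z.1 z.2) ∂Γ := by
            refine lintegral_mono_ae ?_
            filter_upwards [ae_restrict_mem (hX.prod hX.compl), ae_restrict_of_ae hae2]
              with z hzS hz2
            have hz22 : z.2.1 = z.2.2 := le_antisymm (not_lt.mp hz2) (not_lt.mp hzS.2)
            have hz2eq : z.2 = (z.2.1, z.2.1) := Prod.ext_iff.mpr ⟨rfl, hz22.symm⟩
            rw [hz2eq]
            exact ENNReal.ofReal_le_ofReal (del_le_diag z.1 z.2.1)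
    have hC2 : (∫⁻ q, ENNReal.ofReal (dinf q (piD q)) ∂(ν - γ.map Prod.snd))
        ≤ ∫⁻ z in S₃, ENNReal.ofReal (dinf z.1 z.2) ∂Γ := by
      calc (∫⁻ q, ENNReal.ofReal (dinf q (piD q)) ∂(ν - γ.map Prod.snd))
          ≤ ∫⁻ q, ENNReal.ofReal (dinf q (piD q)) ∂((Γ.restrict S₃).map Prod.snd) :=
            lintegral_mono' hsub2 le_rfl
        _ = ∫⁻ z, ENNReal.ofReal (dinf z.2 (piD z.2)) ∂(Γ.restrict S₃) :=
            lintegral_map del_meas measurable_snd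
        _ ≤ ∫⁻ z in S₃, ENNReal.ofReal (dinf z.1 z.2) ∂Γ := by
            refine lintegral_mono_ae ?_
            filter_upwards [ae_restrict_mem (hX.compl.prod hX), ae_restrict_of_ae hae1]
              with z hzS hz1
            have hz11 : z.1.1 = z.1.2 := le_antisymm (not_lt.mp hz1) (not_lt.mp hzS.1)
            have hz1eq : z.1 = (z.1.1, z.1.1) := Prod.ext_iff.mpr ⟨rfl, hz11.symm⟩
            rw [hz1eq, dinf_symm (z.1.1, z.1.1) z.2]
            exact ENNReal.ofReal_le_ofReal (del_le_diag z.2 z.1.1)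
    have hdisjU : Disjoint (S₁ ∪ S₂) S₃ := by
      rw [Set.disjoint_left]
      rintro z hz ⟨hz1', _⟩
      rcases hz with ⟨hz1, _⟩ | ⟨hz1, _⟩ <;> exact hz1' hz1
    calc planCost γ μ ν
        ≤ (∫⁻ z in S₁, ENNReal.ofReal (dinf z.1 z.2) ∂Γ)
          + (∫⁻ z in S₂, ENNReal.ofReal (dinf z.1 z.2) ∂Γ)
          + (∫⁻ z in S₃, ENNReal.ofReal (dinf z.1 z.2) ∂Γ) := by
          unfold planCost
          exact add_le_add (add_le_add le_rfl hB2) hC2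
      _ = ∫⁻ z in (S₁ ∪ S₂) ∪ S₃, ENNReal.ofReal (dinf z.1 z.2) ∂Γ := by
          rw [lintegral_union (hX.compl.prod hX) hdisjU,
            lintegral_union (hX.prod hX.compl) hdisj12]
      _ ≤ ∫⁻ z, ENNReal.ofReal (dinf z.1 z.2) ∂Γ :=
          lintegral_mono' Measure.restrict_le_self le_rfl
  · -- OT ≤ 2 * POT
    have hrw : 2 * POT μ ν = ⨅ γ : {γ : Measure ((ℝ × ℝ) × (ℝ × ℝ)) //
        γ.map Prod.fst ≤ μ ∧ γ.map Prod.snd ≤ ν}, 2 * planCost γ.1 μ ν :=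
      ENNReal.mul_iInf_of_ne two_ne_zero (by norm_num)
    rw [hrw]
    refine le_iInf ?_
    rintro ⟨γ, hγ1, hγ2⟩
    haveI : IsFiniteMeasure (γ.map Prod.fst) :=
      ⟨lt_of_le_of_lt (Measure.le_iff'.mp hγ1 Set.univ) (measure_lt_top μ _)⟩
    haveI : IsFiniteMeasure (γ.map Prod.snd) :=
      ⟨lt_of_le_of_lt (Measure.le_iff'.mp hγ2 Set.univ) (measure_lt_top ν _)⟩
    set ρ := μ - γ.map Prod.fst with hρ
    set σ := ν - γ.map Prod.snd with hσ
    have hfmeas : Measurable fun p : ℝ × ℝ => (p, piD p) := measurable_id.prodMk piD_meas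
    have hgmeas : Measurable fun q : ℝ × ℝ => (piD q, q) := piD_meas.prodMk measurable_id
    have hhmeas : Measurable fun z : (ℝ × ℝ) × (ℝ × ℝ) => (piD z.2, piD z.1) :=
      (piD_meas.comp measurable_snd).prodMk (piD_meas.comp measurable_fst)
    set Γ := γ + ρ.map (fun p => (p, piD p)) + σ.map (fun q => (piD q, q))
        + γ.map (fun z : (ℝ × ℝ) × (ℝ × ℝ) => (piD z.2, piD z.1)) with hΓdef
    have hA : γ.map Prod.fst + ρ = μ := by
      rw [hρ, add_comm]; exact Measure.sub_add_cancel_of_le hγ1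
    have hB : γ.map Prod.snd + σ = ν := by
      rw [hσ, add_comm]; exact Measure.sub_add_cancel_of_le hγ2
    have hfst : Γ.map Prod.fst = μ + ν.map piD := by
      rw [hΓdef, Measure.map_add _ _ measurable_fst, Measure.map_add _ _ measurable_fst,
        Measure.map_add _ _ measurable_fst,
        Measure.map_map measurable_fst hfmeas,
        Measure.map_map measurable_fst hgmeas,
        Measure.map_map measurable_fst hhmeas]
      have e1 : (Prod.fst ∘ fun p : ℝ × ℝ => (p, piD p)) = id := rfl
      have e2 : (Prod.fst ∘ fun q : ℝ × ℝ => (piD q, q)) = piD := rfl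
      have e3 : (Prod.fst ∘ fun z : (ℝ × ℝ) × (ℝ × ℝ) => (piD z.2, piD z.1))
          = piD ∘ Prod.snd := rfl
      rw [e1, e2, e3, Measure.map_id, ← Measure.map_map piD_meas measurable_snd]
      calc γ.map Prod.fst + ρ + σ.map piD + (γ.map Prod.snd).map piD
          = (γ.map Prod.fst + ρ) + (γ.map Prod.snd + σ).map piD := by
            rw [Measure.map_add _ _ piD_meas]
            abel
        _ = μ + ν.map piD := by rw [hA, hB]
    have hsnd : Γ.map Prod.snd = ν + μ.map piD := by
      rw [hΓdef, Measure.map_add _ _ measurable_snd, Measure.map_add _ _ measurable_snd,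
        Measure.map_add _ _ measurable_snd,
        Measure.map_map measurable_snd hfmeas,
        Measure.map_map measurable_snd hgmeas,
        Measure.map_map measurable_snd hhmeas]
      have e1 : (Prod.snd ∘ fun p : ℝ × ℝ => (p, piD p)) = piD := rfl
      have e2 : (Prod.snd ∘ fun q : ℝ × ℝ => (piD q, q)) = id := rfl
      have e3 : (Prod.snd ∘ fun z : (ℝ × ℝ) × (ℝ × ℝ) => (piD z.2, piD z.1))
          = piD ∘ Prod.fst := rfl
      rw [e1, e2, e3, Measure.map_id, ← Measure.map_map piD_meas measurable_fst]
      calc γ.map Prod.snd + ρ.map piD + σ + (γ.map Prod.fst).map piD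
          = (γ.map Prod.snd + σ) + (γ.map Prod.fst + ρ).map piD := by
            rw [Measure.map_add _ _ piD_meas]
            abel
        _ = ν + μ.map piD := by rw [hA, hB]
    refine iInf_le_of_le ⟨Γ, hfst, hsnd⟩ ?_
    have hterm2 : (∫⁻ z, ENNReal.ofReal (dinf z.1 z.2)
          ∂(ρ.map (fun p : ℝ × ℝ => (p, piD p))))
        = ∫⁻ p, ENNReal.ofReal (dinf p (piD p)) ∂ρ := by
      rw [lintegral_map dinf_meas hfmeas]
    have hterm3 : (∫⁻ z, ENNReal.ofReal (dinf z.1 z.2)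
          ∂(σ.map (fun q : ℝ × ℝ => (piD q, q))))
        = ∫⁻ q, ENNReal.ofReal (dinf q (piD q)) ∂σ := by
      rw [lintegral_map dinf_meas hgmeas]
      exact lintegral_congr fun q => by rw [dinf_symm]
    have hterm4 : (∫⁻ z, ENNReal.ofReal (dinf z.1 z.2)
          ∂(γ.map (fun z : (ℝ × ℝ) × (ℝ × ℝ) => (piD z.2, piD z.1))))
        ≤ ∫⁻ z, ENNReal.ofReal (dinf z.1 z.2) ∂γ := by
      rw [lintegral_map dinf_meas hhmeas]
      refine lintegral_mono fun z => ENNReal.ofReal_le_ofReal ?_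
      rw [dinf_symm]
      exact (dinf_piD_le z.1 z.2)
    calc (∫⁻ z, ENNReal.ofReal (dinf z.1 z.2) ∂Γ)
        = (∫⁻ z, ENNReal.ofReal (dinf z.1 z.2) ∂γ)
          + (∫⁻ z, ENNReal.ofReal (dinf z.1 z.2) ∂(ρ.map (fun p : ℝ × ℝ => (p, piD p))))
          + (∫⁻ z, ENNReal.ofReal (dinf z.1 z.2) ∂(σ.map (fun q : ℝ × ℝ => (piD q, q))))
          + (∫⁻ z, ENNReal.ofReal (dinf z.1 z.2)
              ∂(γ.map (fun z : (ℝ × ℝ) × (ℝ × ℝ) => (piD z.2, piD z.1)))) := by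
          rw [hΓdef, lintegral_add_measure, lintegral_add_measure, lintegral_add_measure]
      _ ≤ planCost γ μ ν + (∫⁻ z, ENNReal.ofReal (dinf z.1 z.2) ∂γ) := by
          unfold planCost
          rw [hterm2, hterm3, ← hρ, ← hσ]
          exact add_le_add le_rfl hterm4
      _ ≤ 2 * planCost γ μ ν := by
          rw [two_mul]
          refine add_le_add le_rfl ?_
          unfold planCost
          exact le_add_right (le_add_right le_rfl)
end

section
/- Hinge-function identity: for δ ≥ 0 set t_δ := √(2/(1+2δ²)) and v_δ := (−δ t_δ, −t_δ/2, t_δ/2) ∈ S². Then for every integrable positive measure η on X, S(η)(v_δ) = t_δ · ∫_X max(pers(p) − δ, 0) dη(p). -/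
open MeasureTheory

/-- The inner product of `ℝ³ = ℝ × ℝ × ℝ`. -/
noncomputable def inner3 (v a : ℝ × ℝ × ℝ) : ℝ :=
  v.1 * a.1 + v.2.1 * a.2.1 + v.2.2 * a.2.2

/-- The lift of a planar point: `(1, p) ∈ ℝ³`. -/
def lift (p : ℝ × ℝ) : ℝ × ℝ × ℝ := (1, p.1, p.2)

/-- The persistence `pers(p) = (y−x)/2`. -/
noncomputable def pers (p : ℝ × ℝ) : ℝ := (p.2 - p.1) / 2

/-- `t_δ = √(2/(1+2δ²))`. -/
noncomputable def tdelta (δ : ℝ) : ℝ := Real.sqrt (2 / (1 + 2 * δ ^ 2))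

/-- `v_δ = (−δ t_δ, −t_δ/2, t_δ/2) ∈ S²`. -/
noncomputable def vdelta (δ : ℝ) : ℝ × ℝ × ℝ :=
  (-(δ * tdelta δ), -(tdelta δ / 2), tdelta δ / 2)

/-- Hinge-function identity: for `δ ≥ 0` and every integrable positive measure `η` on
`X = {x < y}`, `S(η)(v_δ) = t_δ ∫ (pers − δ)₊ dη`. -/
theorem hinge_identity
    (δ : ℝ) (hδ : 0 ≤ δ)
    (η : Measure (ℝ × ℝ)) (hηfin : IsFiniteMeasure η)
    (hηX : η {p : ℝ × ℝ | ¬ p.1 < p.2} = 0)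
    (hηint : Integrable enorm2 η) :
    (∫ p, (max 0 (inner3 (vdelta δ) (lift p)) -
        max 0 (inner3 (vdelta δ) (lift (piD p)))) ∂η) =
      tdelta δ * ∫ p, max (pers p - δ) 0 ∂η := by
  have ht : 0 ≤ tdelta δ := Real.sqrt_nonneg _
  have hkey : ∀ p : ℝ × ℝ,
      max 0 (inner3 (vdelta δ) (lift p)) - max 0 (inner3 (vdelta δ) (lift (piD p)))
        = tdelta δ * max (pers p - δ) 0 := by
    intro p
    have h1 : inner3 (vdelta δ) (lift p) = tdelta δ * (pers p - δ) := by
      simp only [inner3, vdelta, lift, pers]; ring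
    have h2 : inner3 (vdelta δ) (lift (piD p)) = -(δ * tdelta δ) := by
      simp only [inner3, vdelta, lift, piD]; ring
    have h3 : max 0 (inner3 (vdelta δ) (lift (piD p))) = 0 := by
      rw [h2, max_eq_left]
      simp [mul_nonneg hδ ht]
    rw [h3, h1, sub_zero, mul_max_of_nonneg _ _ ht, mul_zero, max_comm]
  simp_rw [hkey]
  exact MeasureTheory.integral_const_mul _ _
end
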